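/- Let B be the symmetric bilinear form on ℂ^8 defined by B(u,v) = u_1v_1 + u_2v_2 + u_3v_3 + u_4v_4 − u_5v_5 − u_6v_6 − u_7v_7 − u_8v_8. Let R be a 4-dimensional subspace of ℂ^8 containing both e_1 − e_5 and e_4 − e_8 (the associativity relations of the two operations). Then R = R^± if and only if either (i) there exist a, b, c, d ∈ ℂ with a² + b² = 1, c² + d² = 1, and a c + b d = 0 such that R is the span of e_1 − e_5, e_2 + a e_6 + b e_7, e_3 + c e_6 + d e_7, e_4 − e_8; or (ii) there exist ε, ε' ∈ {1, −1} such that R is the span of e_1 − e_5, e_2 + ε i e_3, e_4 − e_8, e_6 + ε' i e_7. -/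

import Mathlib

noncomputable section

/-- The standard basis vectors of `ℂ^8` (indexed `0,…,7` for `e_1,…,e_8`). -/
def e (i : Fin 8) : Fin 8 → ℂ := Pi.single i 1

/-- The symmetric bilinear form
`B(u,v) = u₁v₁ + u₂v₂ + u₃v₃ + u₄v₄ − u₅v₅ − u₆v₆ − u₇v₇ − u₈v₈` on `ℂ^8`. -/
def Bform (u v : Fin 8 → ℂ) : ℂ :=
  u 0 * v 0 + u 1 * v 1 + u 2 * v 2 + u 3 * v 3
    - u 4 * v 4 - u 5 * v 5 - u 6 * v 6 - u 7 * v 7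

/-- The `B`-orthogonal complement `R^± = {v : ∀ r ∈ R, B(v,r) = 0}` of a subspace. -/
def Bperp (R : Submodule ℂ (Fin 8 → ℂ)) : Submodule ℂ (Fin 8 → ℂ) where
  carrier := {v | ∀ r ∈ R, Bform v r = 0}
  zero_mem' := by intro r hr; simp [Bform]
  add_mem' := by
    intro a b ha hb r hr
    have h1 := ha r hr
    have h2 := hb r hr
    simp only [Set.mem_setOf_eq, Bform, Pi.add_apply] at *
    linear_combination h1 + h2
  smul_mem' := by
    intro c a ha r hr
    have h1 := ha r hr
    simp only [Set.mem_setOf_eq, Bform, Pi.smul_apply, smul_eq_mul] at *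
    linear_combination c * h1

/- ### Auxiliary infrastructure -/

def BF : LinearMap.BilinForm ℂ (Fin 8 → ℂ) :=
  LinearMap.mk₂ ℂ Bform
    (by intro u u' v; simp [Bform]; ring)
    (by intro c u v; simp [Bform]; ring)
    (by intro u v v'; simp [Bform]; ring)
    (by intro c u v; simp [Bform]; ring)

@[simp] lemma BF_apply (u v : Fin 8 → ℂ) : BF u v = Bform u v := rfl

lemma Bform_symm (u v : Fin 8 → ℂ) : Bform u v = Bform v u := by unfold Bform; ring

lemma BF_refl : BF.IsRefl := by
  intro u v h; rw [BF_apply, Bform_symm]; exact h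

lemma BF_nondeg : BF.Nondegenerate := by
  refine (LinearMap.IsRefl.nondegenerate_iff_separatingLeft BF_refl).mpr ?_
  intro v h
  funext j
  fin_cases j
  · have := h (e 0); simpa [Bform, e, Pi.single_apply] using this
  · have := h (e 1); simpa [Bform, e, Pi.single_apply] using this
  · have := h (e 2); simpa [Bform, e, Pi.single_apply] using this
  · have := h (e 3); simpa [Bform, e, Pi.single_apply] using this
  · have := h (e 4); simpa [Bform, e, Pi.single_apply] using this
  · have := h (e 5); simpa [Bform, e, Pi.single_apply] using this
  · have := h (e 6); simpa [Bform, e, Pi.single_apply] using this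
  · have := h (e 7); simpa [Bform, e, Pi.single_apply] using this

lemma Bperp_eq (R : Submodule ℂ (Fin 8 → ℂ)) : Bperp R = BF.orthogonal R := by
  ext v
  constructor
  · intro hv r hr
    have := hv r hr; rw [Bform_symm] at this; exact this
  · intro hv r hr
    have := hv r hr; rw [Bform_symm]; exact this

lemma finrank_Bperp (R : Submodule ℂ (Fin 8 → ℂ)) :
    Module.finrank ℂ (Bperp R) = 8 - Module.finrank ℂ R := by
  rw [Bperp_eq, LinearMap.BilinForm.finrank_orthogonal BF_nondeg R,
    Module.finrank_fin_fun]

lemma selfdual_iff_iso (R : Submodule ℂ (Fin 8 → ℂ)) (hdim : Module.finrank ℂ R = 4) :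
    R = Bperp R ↔ ∀ u ∈ R, ∀ v ∈ R, Bform u v = 0 := by
  constructor
  · intro h u hu v hv
    rw [h] at hu
    exact hu v hv
  · intro h
    have hle : R ≤ Bperp R := fun u hu r hr => h u hu r hr
    have h4 : Module.finrank ℂ (Bperp R) = 4 := by rw [finrank_Bperp, hdim]
    exact Submodule.eq_of_le_of_finrank_le hle (by rw [h4, hdim])

lemma span_iso (s : Set (Fin 8 → ℂ)) (h : ∀ u ∈ s, ∀ v ∈ s, Bform u v = 0) :
    ∀ u ∈ Submodule.span ℂ s, ∀ v ∈ Submodule.span ℂ s, Bform u v = 0 := by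
  intro u hu v hv
  have h1 : ∀ v' ∈ s, Bform u v' = 0 := by
    intro v' hv'
    have hle : Submodule.span ℂ s ≤ LinearMap.ker (BF.flip v') :=
      Submodule.span_le.2 (fun x hx => by
        simp only [SetLike.mem_coe, LinearMap.mem_ker, LinearMap.flip_apply, BF_apply]
        exact h x hx v' hv')
    simpa using hle hu
  have hle : Submodule.span ℂ s ≤ LinearMap.ker (BF u) :=
    Submodule.span_le.2 (fun x hx => by
      simp only [SetLike.mem_coe, LinearMap.mem_ker, BF_apply]
      exact h1 x hx)
  simpa using hle hv

lemma mem_span4 {g1 g2 g3 g4 r : Fin 8 → ℂ} {c1 c2 c3 c4 : ℂ}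
    (h : r = c1 • g1 + c2 • g2 + c3 • g3 + c4 • g4) :
    r ∈ Submodule.span ℂ {g1, g2, g3, g4} := by
  rw [h]
  refine Submodule.add_mem _ (Submodule.add_mem _ (Submodule.add_mem _ ?_ ?_) ?_) ?_ <;>
    refine Submodule.smul_mem _ _ (Submodule.subset_span ?_) <;> simp

lemma coord4 {r : Fin 8 → ℂ} (h : Bform r (e 0 - e 4) = 0) : r 4 = -r 0 := by
  simp [Bform, e, Pi.single_apply] at h
  linear_combination h

lemma coord7 {r : Fin 8 → ℂ} (h : Bform r (e 3 - e 7) = 0) : r 7 = -r 3 := by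
  simp [Bform, e, Pi.single_apply] at h
  linear_combination h

lemma sq_one_cases {x : ℂ} (h : x ^ 2 = 1) : x = 1 ∨ x = -1 := by
  have h0 : (x - 1) * (x + 1) = 0 := by linear_combination h
  rcases mul_eq_zero.mp h0 with h' | h'
  · left; linear_combination h'
  · right; linear_combination h'
set_option maxHeartbeats 1000000 in
lemma caseA (R : Submodule ℂ (Fin 8 → ℂ))
    (hdim : Module.finrank ℂ R = 4)
    (h1 : e 0 - e 4 ∈ R) (h2 : e 3 - e 7 ∈ R)
    (hiso : ∀ u ∈ R, ∀ v ∈ R, Bform u v = 0)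
    (hA : ∀ t ∈ R, t 0 = 0 → t 1 = 0 → t 2 = 0 → t 3 = 0 → t = 0) :
    ∃ a b c d : ℂ, a ^ 2 + b ^ 2 = 1 ∧ c ^ 2 + d ^ 2 = 1 ∧ a * c + b * d = 0 ∧
      R = Submodule.span ℂ
        {e 0 - e 4, e 1 + a • e 5 + b • e 6, e 2 + c • e 5 + d • e 6, e 3 - e 7} := by
  classical
  -- the projection onto coordinates 0,1,2,3
  let g : Fin 4 → Fin 8 := ![0, 1, 2, 3]
  let Φ : (Fin 8 → ℂ) →ₗ[ℂ] (Fin 4 → ℂ) := LinearMap.pi (fun i => LinearMap.proj (g i))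
  have hΦ : ∀ (v : Fin 8 → ℂ) (i : Fin 4), Φ v i = v (g i) := fun v i => rfl
  let ΦR : R →ₗ[ℂ] (Fin 4 → ℂ) := Φ ∘ₗ R.subtype
  have hinj : Function.Injective ΦR := by
    rw [← LinearMap.ker_eq_bot]
    rw [Submodule.eq_bot_iff]
    rintro ⟨t, ht⟩ hker
    have h0 : Φ t = 0 := hker
    have c0 : t 0 = 0 := congrFun h0 0
    have c1 : t 1 = 0 := congrFun h0 1
    have c2 : t 2 = 0 := congrFun h0 2
    have c3 : t 3 = 0 := congrFun h0 3
    exact Subtype.ext (hA t ht c0 c1 c2 c3)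
  have hsurj : Function.Surjective ΦR := by
    rw [← LinearMap.range_eq_top]
    apply Submodule.eq_top_of_finrank_eq
    rw [LinearMap.finrank_range_of_inj hinj, hdim, Module.finrank_fin_fun]
  obtain ⟨⟨sa, hsaR⟩, hsaΦ⟩ := hsurj (Pi.single 1 1)
  obtain ⟨⟨sb, hsbR⟩, hsbΦ⟩ := hsurj (Pi.single 2 1)
  have sa0 : sa 0 = 0 := by have h := congrFun hsaΦ 0; change sa 0 = _ at h; simpa [Pi.single_apply] using h
  have sa1 : sa 1 = 1 := by have h := congrFun hsaΦ 1; change sa 1 = _ at h; simpa [Pi.single_apply] using h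
  have sa2 : sa 2 = 0 := by have h := congrFun hsaΦ 2; change sa 2 = _ at h; simpa [Pi.single_apply] using h
  have sa3 : sa 3 = 0 := by have h := congrFun hsaΦ 3; change sa 3 = _ at h; simpa [Pi.single_apply] using h
  have sb0 : sb 0 = 0 := by have h := congrFun hsbΦ 0; change sb 0 = _ at h; simpa [Pi.single_apply] using h
  have sb1 : sb 1 = 0 := by have h := congrFun hsbΦ 1; change sb 1 = _ at h; simpa [Pi.single_apply] using h
  have sb2 : sb 2 = 1 := by have h := congrFun hsbΦ 2; change sb 2 = _ at h; simpa [Pi.single_apply] using h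
  have sb3 : sb 3 = 0 := by have h := congrFun hsbΦ 3; change sb 3 = _ at h; simpa [Pi.single_apply] using h
  have sa4 : sa 4 = 0 := by rw [coord4 (hiso sa hsaR _ h1), sa0, neg_zero]
  have sa7 : sa 7 = 0 := by rw [coord7 (hiso sa hsaR _ h2), sa3, neg_zero]
  have sb4 : sb 4 = 0 := by rw [coord4 (hiso sb hsbR _ h1), sb0, neg_zero]
  have sb7 : sb 7 = 0 := by rw [coord7 (hiso sb hsbR _ h2), sb3, neg_zero]
  refine ⟨sa 5, sa 6, sb 5, sb 6, ?_, ?_, ?_, ?_⟩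
  · have := hiso sa hsaR sa hsaR
    simp only [Bform] at this
    rw [sa0, sa1, sa2, sa3, sa4, sa7] at this
    linear_combination -this
  · have := hiso sb hsbR sb hsbR
    simp only [Bform] at this
    rw [sb0, sb1, sb2, sb3, sb4, sb7] at this
    linear_combination -this
  · have := hiso sa hsaR sb hsbR
    simp only [Bform] at this
    rw [sa0, sa1, sa2, sa3, sa4, sa7, sb0, sb1, sb2, sb3, sb4, sb7] at this
    linear_combination -this
  · -- R = span
    have hsa_eq : sa = e 1 + sa 5 • e 5 + sa 6 • e 6 := by
      funext j
      fin_cases j <;>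
        simp [e, Pi.single_apply, sa0, sa1, sa2, sa3, sa4, sa7]
    have hsb_eq : sb = e 2 + sb 5 • e 5 + sb 6 • e 6 := by
      funext j
      fin_cases j <;>
        simp [e, Pi.single_apply, sb0, sb1, sb2, sb3, sb4, sb7]
    apply le_antisymm
    · intro r hr
      have r4 : r 4 = -r 0 := coord4 (hiso r hr _ h1)
      have r7 : r 7 = -r 3 := coord7 (hiso r hr _ h2)
      have hr'R : r - (r 0 • (e 0 - e 4) + r 1 • sa + r 2 • sb + r 3 • (e 3 - e 7)) ∈ R := by
        apply Submodule.sub_mem _ hr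
        exact Submodule.add_mem _ (Submodule.add_mem _ (Submodule.add_mem _
          (Submodule.smul_mem _ _ h1) (Submodule.smul_mem _ _ hsaR))
          (Submodule.smul_mem _ _ hsbR)) (Submodule.smul_mem _ _ h2)
      have hz : r - (r 0 • (e 0 - e 4) + r 1 • sa + r 2 • sb + r 3 • (e 3 - e 7)) = 0 := by
        apply hA _ hr'R
        · simp [e, Pi.single_apply, sa0, sb0]
        · simp [e, Pi.single_apply, sa1, sb1]
        · simp [e, Pi.single_apply, sa2, sb2]
        · simp [e, Pi.single_apply, sa3, sb3]
      have heq := sub_eq_zero.mp hz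
      have heq2 : r = r 0 • (e 0 - e 4) + r 1 • (e 1 + sa 5 • e 5 + sa 6 • e 6)
          + r 2 • (e 2 + sb 5 • e 5 + sb 6 • e 6) + r 3 • (e 3 - e 7) := by
        rw [← hsa_eq, ← hsb_eq]; exact heq
      exact mem_span4 heq2
    · rw [Submodule.span_le]
      rintro x hx
      simp only [Set.mem_insert_iff, Set.mem_singleton_iff] at hx
      rcases hx with rfl | rfl | rfl | rfl
      · exact h1
      · rw [← hsa_eq]; exact hsaR
      · rw [← hsb_eq]; exact hsbR
      · exact h2
set_option maxHeartbeats 1000000 in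
lemma caseB (R : Submodule ℂ (Fin 8 → ℂ))
    (hdim : Module.finrank ℂ R = 4)
    (h1 : e 0 - e 4 ∈ R) (h2 : e 3 - e 7 ∈ R)
    (hiso : ∀ u ∈ R, ∀ v ∈ R, Bform u v = 0)
    (t : Fin 8 → ℂ) (htR : t ∈ R) (ht0 : t 0 = 0) (ht1 : t 1 = 0)
    (ht2 : t 2 = 0) (ht3 : t 3 = 0) (htne : t ≠ 0) :
    ∃ ε ε' : ℂ, (ε = 1 ∨ ε = -1) ∧ (ε' = 1 ∨ ε' = -1) ∧
      R = Submodule.span ℂ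
        {e 0 - e 4, e 1 + (ε * Complex.I) • e 2, e 3 - e 7,
         e 5 + (ε' * Complex.I) • e 6} := by
  classical
  have t4 : t 4 = 0 := by rw [coord4 (hiso t htR _ h1), ht0, neg_zero]
  have t7 : t 7 = 0 := by rw [coord7 (hiso t htR _ h2), ht3, neg_zero]
  have h56 : t 5 ^ 2 + t 6 ^ 2 = 0 := by
    have htt := hiso t htR t htR
    simp only [Bform] at htt
    rw [ht0, ht1, ht2, ht3, t4, t7] at htt
    linear_combination -htt
  have ht5 : t 5 ≠ 0 := by
    intro h5
    have h6 : t 6 = 0 := by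
      have h6sq : t 6 ^ 2 = 0 := by rw [h5] at h56; linear_combination h56
      exact pow_eq_zero_iff two_ne_zero |>.mp h6sq
    apply htne
    funext j
    fin_cases j <;> simp [ht0, ht1, ht2, ht3, t4, h5, h6, t7]
  set ε' : ℂ := t 6 / (t 5 * Complex.I) with hε'def
  have hε'2 : ε' ^ 2 = 1 := by
    rw [hε'def, div_pow, div_eq_one_iff_eq (pow_ne_zero _ (mul_ne_zero ht5 Complex.I_ne_zero)),
      mul_pow, Complex.I_sq]
    linear_combination h56
  have ht'_eq : e 5 + (ε' * Complex.I) • e 6 = (t 5)⁻¹ • t := by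
    funext j
    fin_cases j <;>
      simp [e, Pi.single_apply, ht0, ht1, ht2, ht3, t4, t7] <;>
      field_simp [hε'def] <;> first | ring1 | (rw [hε'def]; field_simp [ht5, Complex.I_ne_zero])
  have ht'R : e 5 + (ε' * Complex.I) • e 6 ∈ R := by
    rw [ht'_eq]; exact Submodule.smul_mem _ _ htR
  have hr5 : ∀ r ∈ R, r 5 = -(ε' * Complex.I) * r 6 := by
    intro r hr
    have h := hiso r hr _ ht'R
    simp [Bform, e, Pi.single_apply] at h
    linear_combination -h
  have hpair : ∀ r ∈ R, ∀ r' ∈ R, r 1 * r' 1 + r 2 * r' 2 = 0 := by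
    intro r hr r' hr'
    have hB := hiso r hr r' hr'
    have h4 := coord4 (hiso r hr _ h1)
    have h4' := coord4 (hiso r' hr' _ h1)
    have h7 := coord7 (hiso r hr _ h2)
    have h7' := coord7 (hiso r' hr' _ h2)
    have h5 := hr5 r hr
    have h5' := hr5 r' hr'
    simp only [Bform] at hB
    linear_combination hB + r' 4 * h4 - r 0 * h4' + r' 7 * h7 - r 3 * h7'
      + r' 5 * h5 - (ε' * Complex.I * r 6) * h5'
      + (Complex.I ^ 2 * r 6 * r' 6) * hε'2 + (r 6 * r' 6) * Complex.I_sq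
  have hex : ∃ s ∈ R, s 1 ≠ 0 := by
    by_contra hc
    push_neg at hc
    have hc2 : ∀ s ∈ R, s 2 = 0 := by
      intro s hs
      have hp := hpair s hs s hs
      rw [hc s hs] at hp
      have : s 2 ^ 2 = 0 := by linear_combination hp
      exact pow_eq_zero_iff two_ne_zero |>.mp this
    let Ψ : (Fin 8 → ℂ) →ₗ[ℂ] (Fin 3 → ℂ) :=
      LinearMap.pi (fun i => LinearMap.proj ((![0, 3, 6] : Fin 3 → Fin 8) i))
    have hinj : Function.Injective (Ψ ∘ₗ R.subtype) := by
      rw [← LinearMap.ker_eq_bot, Submodule.eq_bot_iff]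
      rintro ⟨x, hx⟩ hker
      have h0 : Ψ x = 0 := hker
      have c0 : x 0 = 0 := congrFun h0 0
      have c3 : x 3 = 0 := congrFun h0 1
      have c6 : x 6 = 0 := congrFun h0 2
      have c1 : x 1 = 0 := hc x hx
      have c2 : x 2 = 0 := hc2 x hx
      have c4 : x 4 = 0 := by rw [coord4 (hiso x hx _ h1), c0, neg_zero]
      have c7 : x 7 = 0 := by rw [coord7 (hiso x hx _ h2), c3, neg_zero]
      have c5 : x 5 = 0 := by rw [hr5 x hx, c6, mul_zero]
      apply Subtype.ext
      funext j
      fin_cases j <;> simp [c0, c1, c2, c3, c4, c5, c6, c7]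
    have hle : Module.finrank ℂ R ≤ 3 := by
      have := LinearMap.finrank_le_finrank_of_injective hinj
      simpa [Module.finrank_fin_fun] using this
    omega
  obtain ⟨s, hsR, hs1⟩ := hex
  have huR : (s 1)⁻¹ • s ∈ R := Submodule.smul_mem _ _ hsR
  set u : Fin 8 → ℂ := (s 1)⁻¹ • s with hudef
  have hu1 : u 1 = 1 := by
    rw [hudef]; simp; field_simp
  have hu2sq : u 2 ^ 2 = -1 := by
    have hp := hpair u huR u huR
    rw [hu1] at hp
    linear_combination hp
  set ε : ℂ := u 2 / Complex.I with hεdef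
  have hε2 : ε ^ 2 = 1 := by
    rw [hεdef, div_pow, hu2sq, Complex.I_sq]
    norm_num
  have hεI : ε * Complex.I = u 2 := by
    rw [hεdef]; field_simp
  have hu4 := coord4 (hiso u huR _ h1)
  have hu7 := coord7 (hiso u huR _ h2)
  have hu5 := hr5 u huR
  have hs'_eq : e 1 + (ε * Complex.I) • e 2
      = u - u 0 • (e 0 - e 4) - u 3 • (e 3 - e 7)
        - u 5 • (e 5 + (ε' * Complex.I) • e 6) := by
    funext j
    fin_cases j <;>
      simp [e, Pi.single_apply, hεI, hu1] <;>
      first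
        | linear_combination hu4
        | linear_combination -hu4
        | linear_combination hu7
        | linear_combination -hu7
        | linear_combination (ε' * Complex.I) * hu5
            - (Complex.I ^ 2 * u 6) * hε'2 - u 6 * Complex.I_sq
        | linear_combination (-(ε' * Complex.I)) * hu5
            + (Complex.I ^ 2 * u 6) * hε'2 + u 6 * Complex.I_sq
  have hs'R : e 1 + (ε * Complex.I) • e 2 ∈ R := by
    rw [hs'_eq]
    exact Submodule.sub_mem _ (Submodule.sub_mem _ (Submodule.sub_mem _ huR
      (Submodule.smul_mem _ _ h1)) (Submodule.smul_mem _ _ h2))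
      (Submodule.smul_mem _ _ ht'R)
  refine ⟨ε, ε', sq_one_cases hε2, sq_one_cases hε'2, ?_⟩
  apply le_antisymm
  · intro r hr
    have h4 := coord4 (hiso r hr _ h1)
    have h7 := coord7 (hiso r hr _ h2)
    have h5 := hr5 r hr
    have hp : r 1 * 1 + r 2 * (ε * Complex.I) = 0 := by
      have := hpair r hr _ hs'R
      simpa [e, Pi.single_apply] using this
    have heq2 : r = r 0 • (e 0 - e 4) + r 1 • (e 1 + (ε * Complex.I) • e 2)
        + r 3 • (e 3 - e 7) + r 5 • (e 5 + (ε' * Complex.I) • e 6) := by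
      funext j
      fin_cases j <;>
        simp [e, Pi.single_apply] <;>
        first
          | linear_combination h4
          | linear_combination -h4
          | linear_combination h7
          | linear_combination -h7
          | linear_combination (-(ε * Complex.I)) * hp
              + (Complex.I ^ 2 * r 2) * hε2 + r 2 * Complex.I_sq
          | linear_combination (ε * Complex.I) * hp
              - (Complex.I ^ 2 * r 2) * hε2 - r 2 * Complex.I_sq
          | linear_combination (-(ε' * Complex.I)) * h5
              + (Complex.I ^ 2 * r 6) * hε'2 + r 6 * Complex.I_sq
          | linear_combination (ε' * Complex.I) * h5
              - (Complex.I ^ 2 * r 6) * hε'2 - r 6 * Complex.I_sq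
    exact mem_span4 heq2
  · rw [Submodule.span_le]
    rintro x hx
    simp only [Set.mem_insert_iff, Set.mem_singleton_iff] at hx
    rcases hx with rfl | rfl | rfl | rfl
    · exact h1
    · exact hs'R
    · exact h2
    · exact ht'R
set_option maxHeartbeats 1000000 in
theorem associative_self_dual_classification (R : Submodule ℂ (Fin 8 → ℂ))
    (hdim : Module.finrank ℂ R = 4)
    (h1 : e 0 - e 4 ∈ R) (h2 : e 3 - e 7 ∈ R) :
    R = Bperp R ↔
      ((∃ a b c d : ℂ, a ^ 2 + b ^ 2 = 1 ∧ c ^ 2 + d ^ 2 = 1 ∧ a * c + b * d = 0 ∧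
          R = Submodule.span ℂ
            {e 0 - e 4,
             e 1 + a • e 5 + b • e 6,
             e 2 + c • e 5 + d • e 6,
             e 3 - e 7}) ∨
        (∃ ε ε' : ℂ, (ε = 1 ∨ ε = -1) ∧ (ε' = 1 ∨ ε' = -1) ∧
          R = Submodule.span ℂ
            {e 0 - e 4,
             e 1 + (ε * Complex.I) • e 2,
             e 3 - e 7,
             e 5 + (ε' * Complex.I) • e 6})) := by
  rw [selfdual_iff_iso R hdim]
  constructor
  · intro hiso
    by_cases hA : ∀ t ∈ R, t 0 = 0 → t 1 = 0 → t 2 = 0 → t 3 = 0 → t = 0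
    · exact Or.inl (caseA R hdim h1 h2 hiso hA)
    · push_neg at hA
      obtain ⟨t, htR, ht0, ht1, ht2, ht3, htne⟩ := hA
      exact Or.inr (caseB R hdim h1 h2 hiso t htR ht0 ht1 ht2 ht3 htne)
  · rintro (⟨a, b, c, d, hab, hcd, hacbd, hR⟩ | ⟨ε, ε', hε, hε', hR⟩)
    · rw [hR]
      apply span_iso
      intro x hx y hy
      simp only [Set.mem_insert_iff, Set.mem_singleton_iff] at hx hy
      rcases hx with rfl | rfl | rfl | rfl <;> rcases hy with rfl | rfl | rfl | rfl <;>
        simp [Bform, e, Pi.single_apply] <;>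
        first
          | linear_combination hab
          | linear_combination -hab
          | linear_combination hcd
          | linear_combination -hcd
          | linear_combination hacbd
          | linear_combination -hacbd
    · have hε2 : ε ^ 2 = 1 := by rcases hε with rfl | rfl <;> norm_num
      have hε'2 : ε' ^ 2 = 1 := by rcases hε' with rfl | rfl <;> norm_num
      rw [hR]
      apply span_iso
      intro x hx y hy
      simp only [Set.mem_insert_iff, Set.mem_singleton_iff] at hx hy
      rcases hx with rfl | rfl | rfl | rfl <;> rcases hy with rfl | rfl | rfl | rfl <;>
        simp [Bform, e, Pi.single_apply] <;>
        first
          | linear_combination hε2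
          | linear_combination -hε2
          | linear_combination hε'2
          | linear_combination -hε'2
          | linear_combination (Complex.I ^ 2) * hε2 + Complex.I_sq
          | linear_combination (-(Complex.I ^ 2)) * hε2 - Complex.I_sq
          | linear_combination (Complex.I ^ 2) * hε'2 + Complex.I_sq
          | linear_combination (-(Complex.I ^ 2)) * hε'2 - Complex.I_sq
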